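/- Let K ⊆ ℝⁿ be a convex set, β ≥ 0, and let g : K → [0,∞) be β-log-concave. For t > 0 define Y(t) = ∫_K g(x)^t dx. Then for all a, b > 0 with Y(a) < ∞ and Y(b) < ∞, ( (a+b)/2 )^{2n} · Y( (a+b)/2 )² ≥ e^{−β(a+b)} · aⁿ bⁿ · Y(a) Y(b). -/

import Mathlib

open MeasureTheory Set ENNReal

lemma bm_compact {A B C : Set ℝ} (hA : IsCompact A) (hB : IsCompact B)
    (hAne : A.Nonempty) (hBne : B.Nonempty)
    (hmid : ∀ a ∈ A, ∀ b ∈ B, (a + b) / 2 ∈ C) :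
    volume A + volume B ≤ 2 * volume C := by
  set a' := sSup A with ha'
  set b' := sInf B with hb'
  have haA : a' ∈ A := hA.sSup_mem hAne
  have hbB : b' ∈ B := hB.sInf_mem hBne
  have hS1 : ((fun y => 2 * y - b') ⁻¹' A) ⊆ C := by
    intro y hy
    have := hmid _ hy _ hbB
    simpa [show (2 * y - b' + b') / 2 = y by ring] using this
  have hS2 : ((fun y => 2 * y - a') ⁻¹' B) ⊆ C := by
    intro y hy
    have := hmid _ haA _ hy
    simpa [show (a' + (2 * y - a')) / 2 = y by ring] using this
  have hvol1 : volume ((fun y => 2 * y - b') ⁻¹' A) = ENNReal.ofReal 2⁻¹ * volume A := by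
    have : (fun y : ℝ => 2 * y - b') = (fun z : ℝ => z - b') ∘ (fun y : ℝ => 2 * y) := rfl
    rw [this, Set.preimage_comp]
    rw [Real.volume_preimage_mul_left (two_ne_zero)]
    rw [abs_of_pos (by norm_num : (0:ℝ) < 2⁻¹)]
    simp [sub_eq_add_neg, measure_preimage_add_right]
  have hvol2 : volume ((fun y => 2 * y - a') ⁻¹' B) = ENNReal.ofReal 2⁻¹ * volume B := by
    have : (fun y : ℝ => 2 * y - a') = (fun z : ℝ => z - a') ∘ (fun y : ℝ => 2 * y) := rfl
    rw [this, Set.preimage_comp]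
    rw [Real.volume_preimage_mul_left (two_ne_zero)]
    rw [abs_of_pos (by norm_num : (0:ℝ) < 2⁻¹)]
    simp [sub_eq_add_neg, measure_preimage_add_right]
  set S1 := (fun y => 2 * y - b') ⁻¹' A
  set S2 := (fun y => 2 * y - a') ⁻¹' B
  have hmeas2 : MeasurableSet S2 := (measurable_const_mul 2).sub measurable_const hB.measurableSet
  have hsub1 : S1 ⊆ Iic ((a' + b') / 2) := by
    intro y hy
    have : 2 * y - b' ≤ a' := le_csSup hA.bddAbove hy
    simp only [mem_Iic]; linarith
  have hsub2 : S2 ⊆ Ici ((a' + b') / 2) := by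
    intro y hy
    have : b' ≤ 2 * y - a' := csInf_le hB.bddBelow hy
    simp only [mem_Ici]; linarith
  have hinter : volume (S1 ∩ S2) = 0 := by
    have : S1 ∩ S2 ⊆ {(a' + b') / 2} := by
      intro y hy
      have h1 := hsub1 hy.1
      have h2 := hsub2 hy.2
      simp only [mem_Iic] at h1; simp only [mem_Ici] at h2
      simp [le_antisymm h1 h2]
    exact measure_mono_null this (measure_singleton _)
  have key : volume S1 + volume S2 ≤ volume C := by
    have h1 : volume (S1 ∪ S2) + volume (S1 ∩ S2) = volume S1 + volume S2 :=
      measure_union_add_inter S1 hmeas2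
    have h2 : volume (S1 ∪ S2) ≤ volume C := measure_mono (union_subset hS1 hS2)
    calc volume S1 + volume S2 = volume (S1 ∪ S2) + volume (S1 ∩ S2) := h1.symm
      _ = volume (S1 ∪ S2) := by rw [hinter, add_zero]
      _ ≤ volume C := h2
  calc volume A + volume B
      = 2 * (ENNReal.ofReal 2⁻¹ * volume A + ENNReal.ofReal 2⁻¹ * volume B) := by
        have h2 : (2 : ℝ≥0∞) * ENNReal.ofReal 2⁻¹ = 1 := by
          rw [← ENNReal.ofReal_ofNat, ← ENNReal.ofReal_mul (by norm_num)]
          norm_num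
        rw [mul_add, ← mul_assoc, ← mul_assoc, h2, one_mul, one_mul]
    _ = 2 * (volume S1 + volume S2) := by rw [hvol1, hvol2]
    _ ≤ 2 * volume C := by exact mul_le_mul_right key 2

lemma bm_meas {A B C : Set ℝ} (hA : MeasurableSet A) (hB : MeasurableSet B)
    (hAne : A.Nonempty) (hBne : B.Nonempty)
    (hAfin : volume A ≠ ∞) (hBfin : volume B ≠ ∞)
    (hmid : ∀ a ∈ A, ∀ b ∈ B, (a + b) / 2 ∈ C) :
    volume A + volume B ≤ 2 * volume C := by
  refine ENNReal.le_of_forall_pos_le_add fun ε hε _ => ?_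
  have hε2 : ((ε : ℝ≥0∞) / 2) ≠ 0 := by
    simp [ENNReal.div_eq_zero_iff, (coe_ne_zero.2 hε.ne')]
  obtain ⟨K1, hK1A, hK1c, hK1⟩ := hA.exists_isCompact_lt_add hAfin hε2
  obtain ⟨K2, hK2B, hK2c, hK2⟩ := hB.exists_isCompact_lt_add hBfin hε2
  obtain ⟨a0, ha0⟩ := hAne
  obtain ⟨b0, hb0⟩ := hBne
  have hK1c' : IsCompact (K1 ∪ {a0}) := hK1c.union isCompact_singleton
  have hK2c' : IsCompact (K2 ∪ {b0}) := hK2c.union isCompact_singleton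
  have hsub1 : K1 ∪ {a0} ⊆ A := union_subset hK1A (singleton_subset_iff.2 ha0)
  have hsub2 : K2 ∪ {b0} ⊆ B := union_subset hK2B (singleton_subset_iff.2 hb0)
  have hbm := bm_compact hK1c' hK2c' ⟨a0, by simp⟩ ⟨b0, by simp⟩
    (fun x hx y hy => hmid x (hsub1 hx) y (hsub2 hy))
  have h1 : volume A ≤ volume (K1 ∪ {a0}) + ε / 2 :=
    le_trans hK1.le (add_le_add_left (measure_mono subset_union_left) _)
  have h2 : volume B ≤ volume (K2 ∪ {b0}) + ε / 2 :=
    le_trans hK2.le (add_le_add_left (measure_mono subset_union_left) _)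
  calc volume A + volume B ≤ (volume (K1 ∪ {a0}) + ε / 2) + (volume (K2 ∪ {b0}) + ε / 2) :=
        add_le_add h1 h2
    _ = (volume (K1 ∪ {a0}) + volume (K2 ∪ {b0})) + (ε / 2 + ε / 2) := by ring
    _ ≤ 2 * volume C + ε := by
        rw [ENNReal.add_halves]
        exact add_le_add_left hbm _

lemma ennreal_amgm (x y : ℝ≥0∞) : x * y ≤ (2⁻¹ * (x + y))^2 := by
  have h4 : (4:ℝ≥0∞) * (x*y) ≤ (x+y)^2 := by
    rcases le_total x y with hxy | hxy
    · obtain ⟨c, rfl⟩ := exists_add_of_le hxy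
      calc (4:ℝ≥0∞)*(x*(x+c)) = 4*x^2 + 4*(x*c) := by ring
        _ ≤ (4*x^2 + 4*(x*c)) + c^2 := le_self_add
        _ = (x + (x+c))^2 := by ring
    · obtain ⟨c, rfl⟩ := exists_add_of_le hxy
      calc (4:ℝ≥0∞)*((y+c)*y) = 4*y^2 + 4*(y*c) := by ring
        _ ≤ (4*y^2 + 4*(y*c)) + c^2 := le_self_add
        _ = ((y+c) + y)^2 := by ring
  have hsq : ((2:ℝ≥0∞)⁻¹ * (x + y))^2 = 4⁻¹ * (x+y)^2 := by
    rw [mul_pow, ← ENNReal.inv_pow]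
    norm_num
  rw [hsq]
  calc x * y = 4⁻¹ * (4 * (x*y)) := by
        rw [← mul_assoc, ENNReal.inv_mul_cancel (by norm_num) (by norm_num), one_mul]
    _ ≤ 4⁻¹ * (x+y)^2 := mul_le_mul_right h4 _

lemma subst_mul {k : ℝ} (hk : 0 < k) {G : ℝ → ℝ≥0∞} (hG : Measurable G) :
    ∫⁻ u in Ioi (0:ℝ), G (k * u) = ENNReal.ofReal k⁻¹ * ∫⁻ t in Ioi (0:ℝ), G t := by
  have hpre : (fun u : ℝ => k * u) ⁻¹' (Ioi 0) = Ioi (0:ℝ) := by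
    ext u; simp [mul_pos_iff, hk, hk.not_gt, hk.le]
  have h1 : ∫⁻ u in Ioi (0:ℝ), G (k * u)
      = ∫⁻ t, G t ∂(Measure.map (fun u : ℝ => k * u) (volume.restrict ((fun u : ℝ => k*u) ⁻¹' (Ioi 0)))) := by
    rw [lintegral_map hG (measurable_const_mul k), hpre]
  rw [h1, ← Measure.restrict_map (measurable_const_mul k) measurableSet_Ioi,
    Real.map_volume_mul_left hk.ne', Measure.restrict_smul, lintegral_smul_measure,
    abs_of_pos (inv_pos.2 hk), smul_eq_mul]

lemma core1d (f g h : ℝ → ℝ) (M : ℝ)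
    (hfm : Measurable f) (hgm : Measurable g) (hhm : Measurable h)
    (hf0 : ∀ x, 0 ≤ f x) (hg0 : ∀ x, 0 ≤ g x) (hh0 : ∀ x, 0 ≤ h x)
    (hfM : ∀ x, f x ≤ M) (hgM : ∀ x, g x ≤ M)
    (hIf0 : ∫⁻ x, ENNReal.ofReal (f x) ≠ 0) (hIf : ∫⁻ x, ENNReal.ofReal (f x) ≠ ∞)
    (hIg0 : ∫⁻ x, ENNReal.ofReal (g x) ≠ 0) (hIg : ∫⁻ x, ENNReal.ofReal (g x) ≠ ∞)
    (hyp : ∀ x y, f x * g y ≤ h ((x+y)/2) ^ 2) :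
    (∫⁻ x, ENNReal.ofReal (f x)) * (∫⁻ x, ENNReal.ofReal (g x))
      ≤ (∫⁻ x, ENNReal.ofReal (h x))^2 := by
  set If := ∫⁻ x, ENNReal.ofReal (f x) with hIfdef
  set Ig := ∫⁻ x, ENNReal.ofReal (g x) with hIgdef
  set Ih := ∫⁻ x, ENNReal.ofReal (h x) with hIhdef
  have hbddf : BddAbove (Set.range f) := ⟨M, by rintro _ ⟨x, rfl⟩; exact hfM x⟩
  have hbddg : BddAbove (Set.range g) := ⟨M, by rintro _ ⟨x, rfl⟩; exact hgM x⟩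
  set cf := ⨆ x, f x with hcf
  set cg := ⨆ x, g x with hcg
  have hfle : ∀ x, f x ≤ cf := fun x => le_ciSup hbddf x
  have hgle : ∀ x, g x ≤ cg := fun x => le_ciSup hbddg x
  have hcf0 : 0 < cf := by
    by_contra hc
    push_neg at hc
    apply hIf0
    have : ∀ x, f x = 0 := fun x => le_antisymm ((hfle x).trans hc) (hf0 x)
    rw [hIfdef]
    simp [this]
  have hcg0 : 0 < cg := by
    by_contra hc
    push_neg at hc
    apply hIg0
    have : ∀ x, g x = 0 := fun x => le_antisymm ((hgle x).trans hc) (hg0 x)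
    rw [hIgdef]
    simp [this]
  set d := Real.sqrt (cf * cg) with hd
  have hd0 : 0 < d := Real.sqrt_pos.2 (mul_pos hcf0 hcg0)
  have hd2 : d ^ 2 = cf * cg := Real.sq_sqrt (mul_pos hcf0 hcg0).le
  set kf := cf / d with hkf
  set kg := cg / d with hkg
  have hkf0 : 0 < kf := div_pos hcf0 hd0
  have hkg0 : 0 < kg := div_pos hcg0 hd0
  have hkfkg : kf * kg = 1 := by
    rw [hkf, hkg]
    field_simp
    nlinarith [hd2]
  -- level-set inequality
  have level : ∀ u ∈ Ioo (0:ℝ) d,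
      volume {x | kf * u < f x} + volume {x | kg * u < g x}
        ≤ 2 * volume {x | u < h x} := by
    rintro u ⟨hu0, hud⟩
    have hAm : MeasurableSet {x | kf * u < f x} := measurableSet_lt measurable_const hfm
    have hBm : MeasurableSet {x | kg * u < g x} := measurableSet_lt measurable_const hgm
    have hAne : {x | kf * u < f x}.Nonempty := by
      have : kf * u < cf := by
        rw [hkf]
        calc cf / d * u < cf / d * d := by
              exact mul_lt_mul_of_pos_left hud (div_pos hcf0 hd0)
          _ = cf := div_mul_cancel₀ _ hd0.ne'
      obtain ⟨x, hx⟩ := exists_lt_of_lt_ciSup this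
      exact ⟨x, hx⟩
    have hBne : {x | kg * u < g x}.Nonempty := by
      have : kg * u < cg := by
        rw [hkg]
        calc cg / d * u < cg / d * d := by
              exact mul_lt_mul_of_pos_left hud (div_pos hcg0 hd0)
          _ = cg := div_mul_cancel₀ _ hd0.ne'
      obtain ⟨x, hx⟩ := exists_lt_of_lt_ciSup this
      exact ⟨x, hx⟩
    have hfin : ∀ (F : ℝ → ℝ) (e : ℝ), Measurable F → 0 < e →
        (∫⁻ x, ENNReal.ofReal (F x)) ≠ ∞ → volume {x | e < F x} ≠ ∞ := by
      intro F e hFm he hIF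
      have hsub : {x | e < F x} ⊆ {x | ENNReal.ofReal e ≤ (ENNReal.ofReal ∘ F) x} :=
        fun x hx => ENNReal.ofReal_le_ofReal (le_of_lt hx)
      have hmarkov := mul_meas_ge_le_lintegral₀
        (μ := volume) (ENNReal.measurable_ofReal.comp hFm).aemeasurable (ENNReal.ofReal e)
      intro htop
      have h1 : volume {x | ENNReal.ofReal e ≤ (ENNReal.ofReal ∘ F) x} = ∞ :=
        top_le_iff.1 (htop ▸ measure_mono hsub)
      rw [h1, ENNReal.mul_top (by simp [he.ne', he.le, ENNReal.ofReal_eq_zero, he.not_ge])] at hmarkov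
      exact hIF (top_le_iff.1 hmarkov)
    have hAfin := hfin f (kf * u) hfm (mul_pos hkf0 hu0) hIf
    have hBfin := hfin g (kg * u) hgm (mul_pos hkg0 hu0) hIg
    refine bm_meas hAm hBm hAne hBne hAfin hBfin ?_
    intro x hx y hy
    simp only [mem_setOf_eq] at hx hy ⊢
    have hu2 : u ^ 2 < f x * g y := by
      have : (kf * u) * (kg * u) = u ^ 2 := by
        have : (kf * u) * (kg * u) = (kf * kg) * u^2 := by ring
        rw [this, hkfkg, one_mul]
      rw [← this]
      exact mul_lt_mul'' hx hy (mul_pos hkf0 hu0).le (mul_pos hkg0 hu0).le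
    have : u ^ 2 < h ((x + y)/2) ^ 2 := lt_of_lt_of_le hu2 (hyp x y)
    exact lt_of_pow_lt_pow_left₀ 2 (hh0 _) this
  -- antitone measurability
  have hGf : Measurable (fun t : ℝ => volume {x | t < f x}) := by
    apply Antitone.measurable
    intro s t hst
    exact measure_mono (fun x hx => lt_of_le_of_lt hst hx)
  have hGg : Measurable (fun t : ℝ => volume {x | t < g x}) := by
    apply Antitone.measurable
    intro s t hst
    exact measure_mono (fun x hx => lt_of_le_of_lt hst hx)
  -- layer cake
  have layerf : If = ∫⁻ t in Ioi (0:ℝ), volume {x | t < f x} :=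
    lintegral_eq_lintegral_meas_lt volume (ae_of_all _ hf0) hfm.aemeasurable
  have layerg : Ig = ∫⁻ t in Ioi (0:ℝ), volume {x | t < g x} :=
    lintegral_eq_lintegral_meas_lt volume (ae_of_all _ hg0) hgm.aemeasurable
  have layerh : Ih = ∫⁻ t in Ioi (0:ℝ), volume {x | t < h x} :=
    lintegral_eq_lintegral_meas_lt volume (ae_of_all _ hh0) hhm.aemeasurable
  -- substitution + vanish
  have keyint : ∀ (F : ℝ → ℝ) (c : ℝ), Measurable F → (∀ x, F x ≤ c) → 0 < c →
      ∫⁻ u in Ioo (0:ℝ) d, volume {x | (c/d) * u < F x}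
        = ENNReal.ofReal (c/d)⁻¹ * ∫⁻ t in Ioi (0:ℝ), volume {x | t < F x} := by
    intro F c hFm hFc hc0
    have hGF : Measurable (fun t : ℝ => volume {x | t < F x}) := by
      apply Antitone.measurable
      intro s t hst
      exact measure_mono (fun x hx => lt_of_le_of_lt hst hx)
    have hsplit : Ioi (0:ℝ) = Ioo 0 d ∪ Ici d := by
      rw [Ioo_union_Ici_eq_Ioi hd0]
    have hvanish : ∫⁻ u in Ici d, volume {x | (c/d) * u < F x} = 0 := by
      have : ∀ u ∈ Ici d, volume {x | (c/d) * u < F x} = (0:ℝ≥0∞) := by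
        intro u hu
        have hcu : c ≤ (c/d) * u := by
          rw [div_mul_eq_mul_div, le_div_iff₀ hd0]
          exact mul_le_mul_of_nonneg_left hu hc0.le
        have : {x | (c/d) * u < F x} = ∅ := by
          ext x
          simp only [mem_setOf_eq, mem_empty_iff_false, iff_false, not_lt]
          exact (hFc x).trans hcu
        simp [this]
      rw [setLIntegral_congr_fun measurableSet_Ici this]
      simp
    have hsubst : ∫⁻ u in Ioi (0:ℝ), volume {x | (c/d) * u < F x}
        = ENNReal.ofReal (c/d)⁻¹ * ∫⁻ t in Ioi (0:ℝ), volume {x | t < F x} :=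
      subst_mul (div_pos hc0 hd0) hGF
    have hdisj : Disjoint (Ioo (0:ℝ) d) (Ici d) := by
      rw [Set.disjoint_left]
      rintro u ⟨_, hud⟩ hu
      exact absurd hu (not_le.2 hud)
    rw [← hsubst, hsplit, lintegral_union measurableSet_Ici hdisj, hvanish, add_zero]
  have hf_int := keyint f cf hfm hfle hcf0
  have hg_int := keyint g cg hgm hgle hcg0
  -- main inequality
  have main : ENNReal.ofReal kf⁻¹ * If + ENNReal.ofReal kg⁻¹ * Ig ≤ 2 * Ih := by
    have hmf : Measurable (fun u : ℝ => volume {x | kf * u < f x}) :=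
      hGf.comp (measurable_const_mul kf)
    have step1 : ENNReal.ofReal kf⁻¹ * If + ENNReal.ofReal kg⁻¹ * Ig
        = ∫⁻ u in Ioo (0:ℝ) d, (volume {x | kf * u < f x} + volume {x | kg * u < g x}) := by
      rw [lintegral_add_left hmf]
      rw [layerf, layerg, ← hf_int, ← hg_int]
    rw [step1]
    calc ∫⁻ u in Ioo (0:ℝ) d, (volume {x | kf * u < f x} + volume {x | kg * u < g x})
        ≤ ∫⁻ u in Ioo (0:ℝ) d, 2 * volume {x | u < h x} := by
          refine lintegral_mono_ae ?_
          refine (ae_restrict_iff' measurableSet_Ioo).2 (ae_of_all _ ?_)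
          exact fun u hu => level u hu
      _ = 2 * ∫⁻ u in Ioo (0:ℝ) d, volume {x | u < h x} :=
          lintegral_const_mul' _ _ (by norm_num)
      _ ≤ 2 * ∫⁻ u in Ioi (0:ℝ), volume {x | u < h x} := by
          gcongr
          exact Ioo_subset_Ioi_self
      _ = 2 * Ih := by rw [← layerh]
  -- conclude
  have hIfIg : If * Ig = (ENNReal.ofReal kf⁻¹ * If) * (ENNReal.ofReal kg⁻¹ * Ig) := by
    have : ENNReal.ofReal kf⁻¹ * ENNReal.ofReal kg⁻¹ = 1 := by
      rw [← ENNReal.ofReal_mul (inv_nonneg.2 hkf0.le), ← mul_inv, hkfkg]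
      norm_num
    calc If * Ig = (ENNReal.ofReal kf⁻¹ * ENNReal.ofReal kg⁻¹) * (If * Ig) := by
          rw [this, one_mul]
      _ = (ENNReal.ofReal kf⁻¹ * If) * (ENNReal.ofReal kg⁻¹ * Ig) := by ring
  rw [hIfIg]
  calc (ENNReal.ofReal kf⁻¹ * If) * (ENNReal.ofReal kg⁻¹ * Ig)
      ≤ (2⁻¹ * ((ENNReal.ofReal kf⁻¹ * If) + (ENNReal.ofReal kg⁻¹ * Ig)))^2 :=
        ennreal_amgm _ _
    _ ≤ (2⁻¹ * (2 * Ih))^2 := by gcongr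
    _ = Ih^2 := by
        rw [← mul_assoc, ENNReal.inv_mul_cancel (by norm_num) (by norm_num), one_mul]

lemma oneDimPL (f g h : ℝ → ℝ≥0∞)
    (hfm : Measurable f) (hgm : Measurable g) (hhm : Measurable h)
    (hyp : ∀ x y, f x * g y ≤ (h ((x+y)/2))^2) :
    (∫⁻ x, f x) * (∫⁻ x, g x) ≤ (∫⁻ x, h x)^2 := by
  -- truncations
  set T : (ℝ → ℝ≥0∞) → ℕ → ℝ → ℝ≥0∞ :=
    fun f n => indicator (Icc (-(n:ℝ)) n) (fun x => min (f x) n) with hT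
  have hTle : ∀ (f : ℝ → ℝ≥0∞) (n : ℕ) x, T f n x ≤ f x := by
    intro f n x
    rw [hT]
    by_cases hx : x ∈ Icc (-(n:ℝ)) n
    · simp [indicator_of_mem hx, min_le_left]
    · simp [indicator_of_notMem hx]
  have hTn : ∀ (f : ℝ → ℝ≥0∞) (n : ℕ) x, T f n x ≤ (n : ℝ≥0∞) := by
    intro f n x
    rw [hT]
    by_cases hx : x ∈ Icc (-(n:ℝ)) n
    · simp [indicator_of_mem hx, min_le_right]
    · simp [indicator_of_notMem hx]
  have hTtop : ∀ (f : ℝ → ℝ≥0∞) (n : ℕ) x, T f n x ≠ ∞ :=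
    fun f n x => ((hTn f n x).trans_lt (natCast_lt_top n)).ne
  have hTmeas : ∀ (f : ℝ → ℝ≥0∞), Measurable f → ∀ n, Measurable (T f n) := by
    intro f hf n
    exact (hf.min measurable_const).indicator measurableSet_Icc
  have hTmono : ∀ (f : ℝ → ℝ≥0∞), Monotone (T f) := by
    intro f n m hnm
    intro x
    rw [hT]
    by_cases hx : x ∈ Icc (-(n:ℝ)) n
    · have hx' : x ∈ Icc (-(m:ℝ)) m := by
        rcases hx with ⟨h1, h2⟩
        constructor
        · calc -(m:ℝ) ≤ -(n:ℝ) := by exact_mod_cast neg_le_neg (Nat.cast_le.2 hnm)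
            _ ≤ x := h1
        · exact h2.trans (by exact_mod_cast Nat.cast_le.2 hnm)
      simp only [indicator_of_mem hx, indicator_of_mem hx']
      exact min_le_min le_rfl (by exact_mod_cast Nat.cast_le.2 hnm)
    · simp [indicator_of_notMem hx]
  have hTsup : ∀ (f : ℝ → ℝ≥0∞) x, (⨆ n, T f n x) = f x := by
    intro f x
    apply le_antisymm
    · exact iSup_le fun n => hTle f n x
    · obtain ⟨n0, hn0⟩ := exists_nat_gt |x|
      have hxmem : ∀ m : ℕ, n0 ≤ m → x ∈ Icc (-(m:ℝ)) m := by
        intro m hm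
        have : |x| ≤ m := hn0.le.trans (by exact_mod_cast hm)
        rw [abs_le] at this
        exact ⟨this.1, this.2⟩
      rcases eq_top_or_lt_top (f x) with hfx | hfx
      · rw [hfx]
        have key : ∀ m : ℕ, n0 ≤ m → (m : ℝ≥0∞) ≤ ⨆ n, T f n x := by
          intro m hm
          refine le_iSup_of_le m ?_
          rw [hT]
          simp only [indicator_of_mem (hxmem m hm)]
          rw [hfx]
          simp
        calc (⊤:ℝ≥0∞) = ⨆ m : ℕ, (m:ℝ≥0∞) := ENNReal.iSup_natCast.symm
          _ ≤ ⨆ n, T f n x := by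
              refine iSup_le fun m => ?_
              refine le_trans ?_ (key (max m n0) (le_max_right _ _))
              exact_mod_cast Nat.cast_le.2 (le_max_left m n0)
      · obtain ⟨m1, hm1⟩ := ENNReal.exists_nat_gt hfx.ne
        set m := max n0 m1
        refine le_iSup_of_le m ?_
        rw [hT]
        simp only [indicator_of_mem (hxmem m (le_max_left _ _))]
        have : f x ≤ (m : ℝ≥0∞) :=
          hm1.le.trans (by exact_mod_cast Nat.cast_le.2 (le_max_right n0 m1))
        rw [min_eq_left this]
  have hTint : ∀ (f : ℝ → ℝ≥0∞) (n : ℕ), ∫⁻ x, T f n x ≠ ∞ := by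
    intro f n
    have hle : ∫⁻ x, T f n x ≤ ∫⁻ x, indicator (Icc (-(n:ℝ)) n) (fun _ => (n:ℝ≥0∞)) x := by
      refine lintegral_mono fun x => ?_
      rw [hT]
      by_cases hx : x ∈ Icc (-(n:ℝ)) n
      · simp [indicator_of_mem hx, min_le_right]
      · simp [indicator_of_notMem hx]
    have : ∫⁻ x, indicator (Icc (-(n:ℝ)) n) (fun _ => (n:ℝ≥0∞)) x
        = (n:ℝ≥0∞) * volume (Icc (-(n:ℝ)) n) := by
      rw [lintegral_indicator measurableSet_Icc, setLIntegral_const]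
    refine (hle.trans_lt ?_).ne
    rw [this, Real.volume_Icc]
    exact ENNReal.mul_lt_top (natCast_lt_top n) ofReal_lt_top
  have hsupInt : ∀ (f : ℝ → ℝ≥0∞), Measurable f → (⨆ n, ∫⁻ x, T f n x) = ∫⁻ x, f x := by
    intro f hf
    rw [← lintegral_iSup (hTmeas f hf) (fun n m hnm x => hTmono f hnm x)]
    exact lintegral_congr (hTsup f)
  have key : ∀ n m : ℕ, (∫⁻ x, T f n x) * (∫⁻ x, T g m x) ≤ (∫⁻ x, h x)^2 := by
    intro n m
    set k := max n m with hk
    have h1 : (∫⁻ x, T f n x) ≤ ∫⁻ x, T f k x :=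
      lintegral_mono fun x => hTmono f (le_max_left n m) x
    have h2 : (∫⁻ x, T g m x) ≤ ∫⁻ x, T g k x :=
      lintegral_mono fun x => hTmono g (le_max_right n m) x
    refine le_trans (mul_le_mul' h1 h2) ?_
    by_cases hA0 : (∫⁻ x, T f k x) = 0
    · rw [hA0, zero_mul]; exact zero_le
    by_cases hB0 : (∫⁻ x, T g k x) = 0
    · rw [hB0, mul_zero]; exact zero_le
    -- real truncated functions
    set fR : ℝ → ℝ := fun x => (T f k x).toReal with hfR
    set gR : ℝ → ℝ := fun x => (T g k x).toReal with hgR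
    set hR : ℝ → ℝ := fun x => (min (h x) (k:ℝ≥0∞)).toReal with hhR
    have hminTop : ∀ x, min (h x) (k:ℝ≥0∞) ≠ ∞ :=
      fun x => ((min_le_right _ _).trans_lt (natCast_lt_top k)).ne
    have hofF : ∀ x, ENNReal.ofReal (fR x) = T f k x := fun x => ofReal_toReal (hTtop f k x)
    have hofG : ∀ x, ENNReal.ofReal (gR x) = T g k x := fun x => ofReal_toReal (hTtop g k x)
    have hofH : ∀ x, ENNReal.ofReal (hR x) = min (h x) (k:ℝ≥0∞) :=
      fun x => ofReal_toReal (hminTop x)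
    have hIF : ∫⁻ x, ENNReal.ofReal (fR x) = ∫⁻ x, T f k x :=
      lintegral_congr fun x => hofF x
    have hIG : ∫⁻ x, ENNReal.ofReal (gR x) = ∫⁻ x, T g k x :=
      lintegral_congr fun x => hofG x
    have hrealhyp : ∀ x y, fR x * gR y ≤ hR ((x+y)/2) ^ 2 := by
      intro x y
      have step : T f k x * T g k y ≤ (min (h ((x+y)/2)) (k:ℝ≥0∞))^2 := by
        have e1 : T f k x ≤ min (f x) (k:ℝ≥0∞) := by
          rw [hT]
          by_cases hx : x ∈ Icc (-(k:ℝ)) k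
          · simp [indicator_of_mem hx]
          · simp [indicator_of_notMem hx]
        have e2 : T g k y ≤ min (g y) (k:ℝ≥0∞) := by
          rw [hT]
          by_cases hx : y ∈ Icc (-(k:ℝ)) k
          · simp [indicator_of_mem hx]
          · simp [indicator_of_notMem hx]
        have e3 : min (f x) (k:ℝ≥0∞) * min (g y) (k:ℝ≥0∞)
            ≤ min (f x * g y) ((k:ℝ≥0∞) * k) :=
          le_min (mul_le_mul' (min_le_left _ _) (min_le_left _ _))
            (mul_le_mul' (min_le_right _ _) (min_le_right _ _))
        have e4 : min (f x * g y) ((k:ℝ≥0∞) * k)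
            ≤ min ((h ((x+y)/2))^2) ((k:ℝ≥0∞) * k) :=
          min_le_min (hyp x y) le_rfl
        have e5 : min ((h ((x+y)/2))^2) ((k:ℝ≥0∞) * k)
            = (min (h ((x+y)/2)) (k:ℝ≥0∞))^2 := by
          rcases le_total (h ((x+y)/2)) ((k:ℝ≥0∞)) with hle | hle
          · rw [min_eq_left hle, min_eq_left]
            calc (h ((x+y)/2))^2 = h ((x+y)/2) * h ((x+y)/2) := sq _
              _ ≤ (k:ℝ≥0∞) * k := mul_le_mul' hle hle
          · rw [min_eq_right hle, min_eq_right, sq]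
            calc (k:ℝ≥0∞) * k ≤ h ((x+y)/2) * h ((x+y)/2) := mul_le_mul' hle hle
              _ = (h ((x+y)/2))^2 := (sq _).symm
        exact le_trans (mul_le_mul' e1 e2) (le_trans e3 (e4.trans_eq e5))
      have hfin : (min (h ((x+y)/2)) (k:ℝ≥0∞))^2 ≠ ∞ := by
        rw [sq]
        exact (ENNReal.mul_lt_top ((hminTop _).lt_top) ((hminTop _).lt_top)).ne
      calc fR x * gR y = (T f k x * T g k y).toReal := (toReal_mul).symm
        _ ≤ ((min (h ((x+y)/2)) (k:ℝ≥0∞))^2).toReal := toReal_mono hfin step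
        _ = hR ((x+y)/2) ^ 2 := by rw [toReal_pow]
    have hcore := core1d fR gR hR (k:ℝ)
      ((hTmeas f hfm k).ennreal_toReal) ((hTmeas g hgm k).ennreal_toReal)
      ((hhm.min measurable_const).ennreal_toReal)
      (fun x => toReal_nonneg) (fun x => toReal_nonneg) (fun x => toReal_nonneg)
      (fun x => by
        rw [hfR]
        calc (T f k x).toReal ≤ ((k:ℝ≥0∞)).toReal :=
              toReal_mono (natCast_ne_top k) (hTn f k x)
          _ = (k:ℝ) := toReal_natCast k)
      (fun x => by
        rw [hgR]
        calc (T g k x).toReal ≤ ((k:ℝ≥0∞)).toReal :=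
              toReal_mono (natCast_ne_top k) (hTn g k x)
          _ = (k:ℝ) := toReal_natCast k)
      (by rw [hIF]; exact hA0) (by rw [hIF]; exact hTint f k)
      (by rw [hIG]; exact hB0) (by rw [hIG]; exact hTint g k)
      hrealhyp
    rw [hIF, hIG] at hcore
    refine hcore.trans ?_
    have : ∫⁻ x, ENNReal.ofReal (hR x) ≤ ∫⁻ x, h x := by
      refine lintegral_mono fun x => ?_
      rw [hofH x]
      exact min_le_left _ _
    exact pow_le_pow_left' this 2
  rw [← hsupInt f hfm, ← hsupInt g hgm, ENNReal.iSup_mul]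
  refine iSup_le fun n => ?_
  rw [ENNReal.mul_iSup]
  exact iSup_le fun m => key n m

lemma piPL : ∀ (n : ℕ) (f g h : (Fin n → ℝ) → ℝ≥0∞),
    Measurable f → Measurable g → Measurable h →
    (∀ x y, f x * g y ≤ (h ((2:ℝ)⁻¹ • (x + y)))^2) →
    (∫⁻ x, f x) * (∫⁻ x, g x) ≤ (∫⁻ x, h x)^2 := by
  intro n
  induction n with
  | zero =>
    intro f g h hf hg hh hyp
    have hvol : (volume : Measure (Fin 0 → ℝ)) Set.univ = 1 := by
      rw [MeasureTheory.volume_pi, Measure.pi_univ]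
      simp
    have hconst : ∀ (φ : (Fin 0 → ℝ) → ℝ≥0∞), ∫⁻ x, φ x = φ (fun i => i.elim0) := by
      intro φ
      have : φ = fun _ => φ (fun i => i.elim0) :=
        funext fun x => congrArg φ (Subsingleton.elim _ _)
      rw [this, lintegral_const, hvol, mul_one]
    rw [hconst f, hconst g, hconst h]
    have := hyp (fun i => i.elim0) (fun i => i.elim0)
    refine this.trans ?_
    have : ((2:ℝ)⁻¹ • ((fun i : Fin 0 => i.elim0) + fun i : Fin 0 => i.elim0) : Fin 0 → ℝ)
        = fun i => i.elim0 := Subsingleton.elim _ _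
    rw [this]
  | succ n ih =>
    intro f g h hf hg hh hyp
    set e := MeasurableEquiv.piFinSuccAbove (fun _ : Fin (n+1) => ℝ) 0 with he
    have mp : MeasurePreserving e volume volume :=
      volume_preserving_piFinSuccAbove (fun _ : Fin (n+1) => ℝ) 0
    have mps : MeasurePreserving e.symm volume volume := mp.symm
    -- linearity of e.symm on midpoints
    have hlin : ∀ (p q : ℝ × (Fin n → ℝ)),
        e.symm ((p.1 + q.1)/2, (2:ℝ)⁻¹ • (p.2 + q.2))
          = (2:ℝ)⁻¹ • (e.symm p + e.symm q) := by
      have hs : ∀ (c : ℝ) (v : Fin n → ℝ), (e.symm (c, v) : Fin (n+1) → ℝ) = Fin.cons c v := by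
        intro c v
        have : e.symm (c, v) = Fin.insertNthEquiv (fun _ : Fin (n+1) => ℝ) 0 (c, v) := rfl
        rw [this, Fin.insertNthEquiv_zero]
        rfl
      rintro ⟨t, z⟩ ⟨s, w⟩
      simp only [hs]
      funext j
      refine Fin.cases ?_ ?_ j
      · simp only [Fin.cons_zero, Pi.smul_apply, Pi.add_apply, Fin.cons_zero,
          smul_eq_mul] <;> ring
      · intro i
        simp only [Fin.cons_succ, Pi.smul_apply, Pi.add_apply, Fin.cons_succ,
          smul_eq_mul] <;> ring
    -- transfer integrals
    have hint : ∀ (φ : (Fin (n+1) → ℝ) → ℝ≥0∞), Measurable φ →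
        ∫⁻ x, φ x = ∫⁻ p : ℝ × (Fin n → ℝ), φ (e.symm p) := by
      intro φ hφ
      exact (mps.lintegral_comp hφ).symm
    rw [hint f hf, hint g hg, hint h hh]
    have hfm' : Measurable (fun p : ℝ × (Fin n → ℝ) => f (e.symm p)) :=
      hf.comp e.symm.measurable
    have hgm' : Measurable (fun p : ℝ × (Fin n → ℝ) => g (e.symm p)) :=
      hg.comp e.symm.measurable
    have hhm' : Measurable (fun p : ℝ × (Fin n → ℝ) => h (e.symm p)) :=
      hh.comp e.symm.measurable
    -- Fubini
    have hprodf : ∫⁻ p : ℝ × (Fin n → ℝ), f (e.symm p)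
        = ∫⁻ t : ℝ, ∫⁻ z : Fin n → ℝ, f (e.symm (t, z)) :=
      lintegral_prod _ hfm'.aemeasurable
    have hprodg : ∫⁻ p : ℝ × (Fin n → ℝ), g (e.symm p)
        = ∫⁻ t : ℝ, ∫⁻ z : Fin n → ℝ, g (e.symm (t, z)) :=
      lintegral_prod _ hgm'.aemeasurable
    have hprodh : ∫⁻ p : ℝ × (Fin n → ℝ), h (e.symm p)
        = ∫⁻ t : ℝ, ∫⁻ z : Fin n → ℝ, h (e.symm (t, z)) :=
      lintegral_prod _ hhm'.aemeasurable
    rw [hprodf, hprodg, hprodh]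
    set F : ℝ → ℝ≥0∞ := fun t => ∫⁻ z : Fin n → ℝ, f (e.symm (t, z)) with hF
    set G : ℝ → ℝ≥0∞ := fun t => ∫⁻ z : Fin n → ℝ, g (e.symm (t, z)) with hG
    set H : ℝ → ℝ≥0∞ := fun t => ∫⁻ z : Fin n → ℝ, h (e.symm (t, z)) with hH
    have hFm : Measurable F := Measurable.lintegral_prod_right hfm'
    have hGm : Measurable G := Measurable.lintegral_prod_right hgm'
    have hHm : Measurable H := Measurable.lintegral_prod_right hhm'
    refine oneDimPL F G H hFm hGm hHm ?_
    intro t s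
    refine ih (fun z => f (e.symm (t, z))) (fun z => g (e.symm (s, z)))
      (fun z => h (e.symm ((t+s)/2, z)))
      (hf.comp (e.symm.measurable.comp measurable_prodMk_left))
      (hg.comp (e.symm.measurable.comp measurable_prodMk_left))
      (hh.comp (e.symm.measurable.comp measurable_prodMk_left)) ?_
    intro z w
    have := hyp (e.symm (t, z)) (e.symm (s, w))
    have heq : e.symm ((t+s)/2, (2:ℝ)⁻¹ • (z + w))
        = (2:ℝ)⁻¹ • (e.symm (t, z) + e.symm (s, w)) := hlin (t, z) (s, w)
    rw [← heq] at this
    exact this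

lemma eucPL (n : ℕ) (f g h : EuclideanSpace ℝ (Fin n) → ℝ≥0∞)
    (hf : Measurable f) (hg : Measurable g) (hh : Measurable h)
    (hyp : ∀ x y, f x * g y ≤ (h ((2:ℝ)⁻¹ • (x + y)))^2) :
    (∫⁻ x, f x) * (∫⁻ x, g x) ≤ (∫⁻ x, h x)^2 := by
  set e := (MeasurableEquiv.toLp 2 (Fin n → ℝ)).symm with he
  have mp : MeasurePreserving e volume volume :=
    EuclideanSpace.volume_preserving_symm_measurableEquiv_toLp (Fin n)
  have mps : MeasurePreserving e.symm volume volume := mp.symm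
  have hint : ∀ (φ : EuclideanSpace ℝ (Fin n) → ℝ≥0∞), Measurable φ →
      ∫⁻ x, φ x = ∫⁻ p : Fin n → ℝ, φ (e.symm p) := by
    intro φ hφ
    exact (mps.lintegral_comp hφ).symm
  rw [hint f hf, hint g hg, hint h hh]
  refine piPL n _ _ _ (hf.comp e.symm.measurable) (hg.comp e.symm.measurable)
    (hh.comp e.symm.measurable) ?_
  intro x y
  have hlin : e.symm ((2:ℝ)⁻¹ • (x + y)) = (2:ℝ)⁻¹ • (e.symm x + e.symm y) := rfl
  rw [hlin]
  exact hyp (e.symm x) (e.symm y)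

lemma euc_scale (n : ℕ) (r : ℝ) (hr : r ≠ 0) (φ : EuclideanSpace ℝ (Fin n) → ℝ≥0∞)
    (hφ : Measurable φ) :
    ∫⁻ x, φ (r • x) = ENNReal.ofReal |(r ^ n)⁻¹| * ∫⁻ x, φ x := by
  have h1 : ∫⁻ x, φ (r • x) = ∫⁻ y, φ y ∂(Measure.map (fun x : EuclideanSpace ℝ (Fin n) => r • x) volume) :=
    (lintegral_map hφ (measurable_const_smul r)).symm
  rw [h1, Measure.map_addHaar_smul volume hr, lintegral_smul_measure,
    finrank_euclideanSpace_fin, smul_eq_mul]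



open MeasureTheory

/-- For a `β`-log-concave `g : K → [0,∞)` on a convex `K ⊆ ℝⁿ` and
`Y(t) = ∫_K g(x)^t dx`, for all `a, b > 0` with `Y(a), Y(b) < ∞`:
`((a+b)/2)^{2n} Y((a+b)/2)² ≥ e^{−β(a+b)} aⁿ bⁿ Y(a) Y(b)`. -/
theorem beta_logconcave_partition_function_inequality
    {n : ℕ} (K : Set (EuclideanSpace ℝ (Fin n))) (hK : Convex ℝ K)
    (β : ℝ) (hβ : 0 ≤ β)
    (g : EuclideanSpace ℝ (Fin n) → ℝ) (hgm : Measurable g)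
    (hg0 : ∀ x ∈ K, 0 ≤ g x)
    (hgβ : ∀ x ∈ K, ∀ y ∈ K, ∀ α : ℝ, α ∈ Set.Icc (0:ℝ) 1 →
      Real.exp (-β) * (g x ^ α * g y ^ (1 - α)) ≤ g (α • x + (1 - α) • y))
    (a b : ℝ) (ha : 0 < a) (hb : 0 < b)
    (hYa : IntegrableOn (fun x => g x ^ a) K)
    (hYb : IntegrableOn (fun x => g x ^ b) K) :
    Real.exp (-β * (a + b)) * (a ^ n * b ^ n) *
        ((∫ x in K, g x ^ a) * (∫ x in K, g x ^ b))
      ≤ ((a + b) / 2) ^ (2 * n) * (∫ x in K, g x ^ ((a + b) / 2)) ^ 2 := by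
  have hab : 0 < a + b := by linarith
  set c : ℝ := (a + b) / 2 with hc
  have hc0 : 0 < c := by positivity
  set S := interior K with hS
  set T := closure K with hT
  have hSm : MeasurableSet S := isOpen_interior.measurableSet
  have hTm : MeasurableSet T := isClosed_closure.measurableSet
  have hSK : S ⊆ K := interior_subset
  have hKT : K ⊆ T := subset_closure
  have hfront : volume (frontier K) = 0 := hK.addHaar_frontier volume
  have hKS : volume (K \ S) = 0 := by
    refine measure_mono_null ?_ hfront
    intro x hx
    rw [frontier]
    exact ⟨hKT hx.1, hx.2⟩
  have hTK : volume (T \ K) = 0 := by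
    refine measure_mono_null ?_ hfront
    intro x hx
    rw [frontier]
    exact ⟨hx.1, fun h => hx.2 (interior_subset h)⟩
  have haeS : (K : Set (EuclideanSpace ℝ (Fin n))) =ᵐ[volume] S :=
    (MeasureTheory.ae_eq_set).2 ⟨hKS, by
      have : S \ K = ∅ := by
        rw [diff_eq_empty]; exact hSK
      simp [this]⟩
  have haeT : (K : Set (EuclideanSpace ℝ (Fin n))) =ᵐ[volume] T :=
    (MeasureTheory.ae_eq_set).2 ⟨by
      have : K \ T = ∅ := by rw [diff_eq_empty]; exact hKT
      simp [this], hTK⟩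
  have hresS : volume.restrict K = volume.restrict S := Measure.restrict_congr_set haeS
  have hresT : volume.restrict K = volume.restrict T := Measure.restrict_congr_set haeT
  -- measurable integrands
  have hma : Measurable fun x => g x ^ a :=
    (Real.continuous_rpow_const ha.le).measurable.comp hgm
  have hmb : Measurable fun x => g x ^ b :=
    (Real.continuous_rpow_const hb.le).measurable.comp hgm
  have hmc : Measurable fun x => g x ^ c :=
    (Real.continuous_rpow_const hc0.le).measurable.comp hgm
  -- integrability of g^c
  have hYc : IntegrableOn (fun x => g x ^ c) K := by
    refine Integrable.mono' (hYa.add hYb) hmc.aestronglyMeasurable ?_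
    rw [IntegrableOn] at *
    rw [hresS]
    refine (ae_restrict_iff' hSm).2 (ae_of_all _ fun x hx => ?_)
    have hxK : x ∈ K := hSK hx
    have hgx : 0 ≤ g x := hg0 x hxK
    rw [Real.norm_eq_abs, abs_of_nonneg (Real.rpow_nonneg hgx c)]
    rcases eq_or_lt_of_le hgx with hg1 | hg1
    · rw [← hg1, Real.zero_rpow hc0.ne']
      have h2 := Real.rpow_nonneg hgx a
      have h3 := Real.rpow_nonneg hgx b
      simp only [Pi.add_apply]
      linarith
    rcases le_total (g x) 1 with hgle | hgle
    · have hminc : min a b ≤ c := by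
        rcases le_total a b with h' | h' <;> simp [min_def, h', hc] <;> linarith
      have h1 : g x ^ c ≤ g x ^ min a b :=
        Real.rpow_le_rpow_of_exponent_ge hg1 hgle hminc
      rcases min_choice a b with hm | hm <;> rw [hm] at h1 <;>
        simp only [Pi.add_apply] <;>
        [have := Real.rpow_nonneg hgx b; have := Real.rpow_nonneg hgx a] <;> linarith
    · have hmaxc : c ≤ max a b := by
        rcases le_total a b with h' | h' <;> simp [max_def, h', hc] <;> linarith
      have h1 : g x ^ c ≤ g x ^ max a b :=
        Real.rpow_le_rpow_of_exponent_le hgle hmaxc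
      rcases max_choice a b with hm | hm <;> rw [hm] at h1 <;>
        simp only [Pi.add_apply] <;>
        [have := Real.rpow_nonneg hgx b; have := Real.rpow_nonneg hgx a] <;> linarith
  -- lintegral quantities
  set Ia := ∫⁻ x in K, ENNReal.ofReal (g x ^ a) with hIa
  set Ib := ∫⁻ x in K, ENNReal.ofReal (g x ^ b) with hIb
  set Ic := ∫⁻ x in K, ENNReal.ofReal (g x ^ c) with hIc
  have hnonnegae : ∀ t : ℝ, (0:EuclideanSpace ℝ (Fin n) → ℝ) ≤ᵐ[volume.restrict K]
      fun x => g x ^ t := by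
    intro t
    rw [hresS]
    refine (ae_restrict_iff' hSm).2 (ae_of_all _ fun x hx => ?_)
    exact Real.rpow_nonneg (hg0 x (hSK hx)) t
  have hYaeq : ∫ x in K, g x ^ a = Ia.toReal := by
    rw [hIa, integral_eq_lintegral_of_nonneg_ae (hnonnegae a) hma.aestronglyMeasurable]
  have hYbeq : ∫ x in K, g x ^ b = Ib.toReal := by
    rw [hIb, integral_eq_lintegral_of_nonneg_ae (hnonnegae b) hmb.aestronglyMeasurable]
  have hYceq : ∫ x in K, g x ^ c = Ic.toReal := by
    rw [hIc, integral_eq_lintegral_of_nonneg_ae (hnonnegae c) hmc.aestronglyMeasurable]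
  have hIatop : Ia ≠ ∞ := hYa.lintegral_lt_top.ne
  have hIbtop : Ib ≠ ∞ := hYb.lintegral_lt_top.ne
  have hIctop : Ic ≠ ∞ := hYc.lintegral_lt_top.ne
  -- the three PL functions
  set Fa : EuclideanSpace ℝ (Fin n) → ℝ≥0∞ := fun y => ENNReal.ofReal (g y ^ a) with hFa
  set Fb : EuclideanSpace ℝ (Fin n) → ℝ≥0∞ := fun y => ENNReal.ofReal (g y ^ b) with hFb
  set Fc : EuclideanSpace ℝ (Fin n) → ℝ≥0∞ :=
    fun y => ENNReal.ofReal (Real.exp (β * c) * g y ^ c) with hFc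
  have hFam : Measurable (S.indicator Fa) :=
    (ENNReal.measurable_ofReal.comp hma).indicator hSm
  have hFbm : Measurable (S.indicator Fb) :=
    (ENNReal.measurable_ofReal.comp hmb).indicator hSm
  have hFcm : Measurable (T.indicator Fc) :=
    (ENNReal.measurable_ofReal.comp (measurable_const.mul hmc)).indicator hTm
  set u : EuclideanSpace ℝ (Fin n) → ℝ≥0∞ := fun x => S.indicator Fa (a⁻¹ • x) with hu
  set v : EuclideanSpace ℝ (Fin n) → ℝ≥0∞ := fun x => S.indicator Fb (b⁻¹ • x) with hv
  set w : EuclideanSpace ℝ (Fin n) → ℝ≥0∞ := fun x => T.indicator Fc (c⁻¹ • x) with hw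
  have hum : Measurable u := hFam.comp (measurable_const_smul _)
  have hvm : Measurable v := hFbm.comp (measurable_const_smul _)
  have hwm : Measurable w := hFcm.comp (measurable_const_smul _)
  -- PL hypothesis
  have hyp : ∀ x y, u x * v y ≤ (w ((2:ℝ)⁻¹ • (x + y)))^2 := by
    intro x y
    by_cases hp : a⁻¹ • x ∈ S
    case neg => rw [hu]; simp [indicator_of_notMem hp]
    by_cases hq : b⁻¹ • y ∈ S
    case neg => rw [hv]; simp [indicator_of_notMem hq]
    set p := a⁻¹ • x with hpdef
    set q := b⁻¹ • y with hqdef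
    have hpK : p ∈ K := hSK hp
    have hqK : q ∈ K := hSK hq
    set α' : ℝ := a / (a + b) with hα'
    have hα'mem : α' ∈ Icc (0:ℝ) 1 := by
      constructor
      · positivity
      · rw [hα', div_le_one hab]; linarith
    have h1α' : 1 - α' = b / (a + b) := by rw [hα']; field_simp; ring
    set m := α' • p + (1 - α') • q with hm
    have hmK : m ∈ K := hK hpK hqK hα'mem.1 (by rw [h1α']; positivity) (by ring)
    have hmid : c⁻¹ • ((2:ℝ)⁻¹ • (x + y)) = m := by
      rw [hm, hpdef, hqdef, smul_smul, smul_smul, smul_smul, smul_add]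
      have e1 : c⁻¹ * 2⁻¹ = (a+b)⁻¹ := by rw [hc]; field_simp
      have e2 : α' * a⁻¹ = (a+b)⁻¹ := by rw [hα']; rw [div_mul_eq_mul_div, mul_comm]; rw [← div_mul_eq_mul_div]; field_simp
      have e3 : (1 - α') * b⁻¹ = (a+b)⁻¹ := by
        rw [h1α', div_mul_eq_mul_div, mul_comm, ← div_mul_eq_mul_div]
        field_simp
      rw [e1, e2, e3]
    have hwval : w ((2:ℝ)⁻¹ • (x + y)) = Fc m := by
      rw [hw]
      simp only
      rw [hmid, indicator_of_mem (hKT hmK)]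
    have huval : u x = Fa p := by rw [hu]; simp only; rw [← hpdef, indicator_of_mem hp]
    have hvval : v y = Fb q := by rw [hv]; simp only; rw [← hqdef, indicator_of_mem hq]
    rw [huval, hvval, hwval]
    -- real inequality
    have hgp : 0 ≤ g p := hg0 p hpK
    have hgq : 0 ≤ g q := hg0 q hqK
    have hgmm : 0 ≤ g m := hg0 m hmK
    have hstep := hgβ p hpK q hqK α' hα'mem
    have hLnn : 0 ≤ Real.exp (-β) * (g p ^ α' * g q ^ (1 - α')) := by positivity
    have hpow := Real.rpow_le_rpow hLnn hstep (le_of_lt hab)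
    have hexpand : (Real.exp (-β) * (g p ^ α' * g q ^ (1 - α'))) ^ (a + b)
        = Real.exp (-β * (a + b)) * (g p ^ a * g q ^ b) := by
      rw [Real.mul_rpow (Real.exp_nonneg _) (by positivity),
        Real.mul_rpow (Real.rpow_nonneg hgp _) (Real.rpow_nonneg hgq _),
        ← Real.rpow_mul hgp, ← Real.rpow_mul hgq, ← Real.exp_mul,
        (show α' * (a + b) = a by rw [hα']; field_simp),
        (show (1 - α') * (a + b) = b by rw [h1α']; field_simp)]
    rw [hexpand] at hpow
    have hE2 : (Real.exp (β * c) * g m ^ c)^2 = Real.exp (β * (a+b)) * g m ^ (a+b) := by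
      rw [mul_pow]
      congr 1
      · rw [← Real.exp_nat_mul]
        congr 1
        rw [hc]; push_cast; ring
      · rw [← Real.rpow_natCast (g m ^ c) 2, ← Real.rpow_mul hgmm]
        congr 1
        rw [hc]; push_cast; ring
    have hone : Real.exp (β*(a+b)) * Real.exp (-β*(a+b)) = 1 := by
      rw [← Real.exp_add, (show β*(a+b) + -β*(a+b) = 0 by ring), Real.exp_zero]
    have hreal : g p ^ a * g q ^ b ≤ (Real.exp (β * c) * g m ^ c)^2 := by
      rw [hE2]
      have h2 := mul_le_mul_of_nonneg_left hpow (Real.exp_nonneg (β*(a+b)))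
      calc g p ^ a * g q ^ b
          = (Real.exp (β*(a+b)) * Real.exp (-β*(a+b))) * (g p ^ a * g q ^ b) := by
            rw [hone, one_mul]
        _ = Real.exp (β*(a+b)) * (Real.exp (-β*(a+b)) * (g p ^ a * g q ^ b)) := by ring
        _ ≤ Real.exp (β*(a+b)) * g m ^ (a+b) := h2
    rw [hFa, hFb, hFc]
    calc ENNReal.ofReal (g p ^ a) * ENNReal.ofReal (g q ^ b)
        = ENNReal.ofReal (g p ^ a * g q ^ b) :=
          (ENNReal.ofReal_mul (Real.rpow_nonneg hgp a)).symm
      _ ≤ ENNReal.ofReal ((Real.exp (β * c) * g m ^ c)^2) := ENNReal.ofReal_le_ofReal hreal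
      _ = (ENNReal.ofReal (Real.exp (β * c) * g m ^ c))^2 :=
          ENNReal.ofReal_pow (by positivity) 2
  -- apply PL
  have hPL := eucPL n u v w hum hvm hwm hyp
  -- compute the three integrals
  have hIu : ∫⁻ x, u x = ENNReal.ofReal (a^n) * Ia := by
    rw [hu]
    have := euc_scale n a⁻¹ (inv_ne_zero ha.ne') _ hFam
    rw [this, lintegral_indicator hSm, ← hresS, ← hIa, inv_pow, inv_inv,
      abs_of_pos (pow_pos ha n)]
  have hIv : ∫⁻ x, v x = ENNReal.ofReal (b^n) * Ib := by
    rw [hv]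
    have := euc_scale n b⁻¹ (inv_ne_zero hb.ne') _ hFbm
    rw [this, lintegral_indicator hSm, ← hresS, ← hIb, inv_pow, inv_inv,
      abs_of_pos (pow_pos hb n)]
  have hIw : ∫⁻ x, w x = ENNReal.ofReal (c^n) * (ENNReal.ofReal (Real.exp (β*c)) * Ic) := by
    rw [hw]
    have := euc_scale n c⁻¹ (inv_ne_zero hc0.ne') _ hFcm
    rw [this, lintegral_indicator hTm, ← hresT, inv_pow, inv_inv,
      abs_of_pos (pow_pos hc0 n)]
    congr 1
    have hsplit : ∀ x, Fc x = ENNReal.ofReal (Real.exp (β*c)) * ENNReal.ofReal (g x ^ c) := by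
      intro x
      rw [hFc]
      exact ENNReal.ofReal_mul (Real.exp_nonneg _)
    rw [show (∫⁻ x in K, Fc x)
        = ∫⁻ x in K, ENNReal.ofReal (Real.exp (β*c)) * ENNReal.ofReal (g x ^ c) from
      lintegral_congr hsplit]
    rw [lintegral_const_mul _ hmc.ennreal_ofReal]
  rw [hIu, hIv, hIw] at hPL
  -- pass to reals
  have hRHSne : (ENNReal.ofReal (c^n) * (ENNReal.ofReal (Real.exp (β*c)) * Ic))^2 ≠ ∞ := by
    refine ENNReal.pow_ne_top (ENNReal.mul_ne_top ENNReal.ofReal_ne_top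
      (ENNReal.mul_ne_top ENNReal.ofReal_ne_top hIctop))
  have hto := ENNReal.toReal_mono hRHSne hPL
  rw [ENNReal.toReal_mul, ENNReal.toReal_mul, ENNReal.toReal_mul, ENNReal.toReal_pow,
    ENNReal.toReal_mul, ENNReal.toReal_mul,
    ENNReal.toReal_ofReal (pow_nonneg ha.le n),
    ENNReal.toReal_ofReal (pow_nonneg hb.le n),
    ENNReal.toReal_ofReal (pow_nonneg hc0.le n),
    ENNReal.toReal_ofReal (Real.exp_nonneg _)] at hto
  rw [hYaeq, hYbeq, hYceq]
  set Ra := Ia.toReal with hRa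
  set Rb := Ib.toReal with hRb
  set Rc := Ic.toReal with hRc
  have hRcnn : 0 ≤ Rc := ENNReal.toReal_nonneg
  have hE2 : Real.exp (β*c)^2 = Real.exp (β*(a+b)) := by
    rw [← Real.exp_nat_mul]
    congr 1
    rw [hc]; push_cast; ring
  have hone : Real.exp (-β*(a+b)) * Real.exp (β*(a+b)) = 1 := by
    rw [← Real.exp_add, (show -β*(a+b) + β*(a+b) = 0 by ring), Real.exp_zero]
  have hrw : (c^n * (Real.exp (β*c) * Rc))^2
      = Real.exp (β*(a+b)) * (c^(2*n) * Rc^2) := by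
    rw [mul_pow, mul_pow, hE2, ← pow_mul, mul_comm n 2]
    ring
  calc Real.exp (-β * (a + b)) * (a ^ n * b ^ n) * (Ra * Rb)
      = Real.exp (-β*(a+b)) * ((a^n * Ra) * (b^n * Rb)) := by ring
    _ ≤ Real.exp (-β*(a+b)) * ((c^n * (Real.exp (β*c) * Rc))^2) :=
        mul_le_mul_of_nonneg_left hto (Real.exp_nonneg _)
    _ = (Real.exp (-β*(a+b)) * Real.exp (β*(a+b))) * (c^(2*n) * Rc^2) := by
        rw [hrw]; ring
    _ = c^(2*n) * Rc^2 := by rw [hone, one_mul]
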